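/- (Binning collision bound in the dual protocol.) In Protocol A under the alternative hypothesis (φ = q_{X,Z_1,Z_2}), for detector j ∈ {1,2} let 𝓔_{j,NS,0} be the event that there exist ỹ_0^n ≠ Y_0^n and ỹ_j^n ≠ Y_j^n with 𝓑_{M,0}(ỹ_0^n)=M_0, 𝓑_{F,0}(ỹ_0^n)=F_0, 𝓑_{M,j}(ỹ_j^n)=M_j, 𝓑_{F,j}(ỹ_j^n)=F_j and the joint type of (ỹ_0^n, ỹ_j^n, Z_j^n) within δ′_n of p_{Y_0,Y_j,Z_j}, and let Ψ_{0,j} be the event that the type of Z_j^n is within δ′_n of p_{Z_j}. Then P_q( 𝓔_{j,NS,0} | 𝓔_0 ∧ Ψ_{0,j} ) ≤ 2^{−n·( R_0 + R̃_0 + R_j + R̃_j − H(Y_0, Y_j | Z_j) − η_{0,n} )}, where H(Y_0,Y_j|Z_j) is the conditional entropy under p_{Y_0,Y_j,Z_j}(y_0,y_j,z_j) := ∑_x p(x,z_j)·p(y_0,y_j|x) and η_{0,n} → 0 as n → ∞. -/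

import Mathlib

open Finset Filter

attribute [local instance] Classical.propDecidable

section ProtocolA

variable {𝒳 : Type*} [Fintype 𝒳] (𝒵 : Fin 2 → Type*) [∀ j, Fintype (𝒵 j)]
  (𝒴 : Fin 3 → Type*) [∀ i, Fintype (𝒴 i)] [∀ i, DecidableEq (𝒴 i)]

/-- Probability of an event in Protocol A at blocklength `n`:
`(X^n, Z^n_{[1:2]})` is i.i.d. `φ`, `Y^n_{[0:2]}` is generated coordinatewise through
`p_{Y_{[0:2]}|X}`, and the binnings `𝓑_{M,i}, 𝓑_{F,i}` (`i ∈ [0:2]`) are independent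
uniformly random functions into `[1:Mv i]` resp. `[1:Fv i]`. -/
noncomputable def prA (φ : 𝒳 × (∀ j, 𝒵 j) → ℝ) (pY : 𝒳 → (∀ i, 𝒴 i) → ℝ)
    (Mv Fv : Fin 3 → ℕ) (n : ℕ)
    (E : (Fin n → 𝒳) → (∀ j, Fin n → 𝒵 j) → (Fin n → ∀ i, 𝒴 i) →
      (∀ i, (Fin n → 𝒴 i) → Fin (Mv i)) → (∀ i, (Fin n → 𝒴 i) → Fin (Fv i)) → Prop) :
    ℝ :=
  ∑ x : Fin n → 𝒳, ∑ z : ∀ j, Fin n → 𝒵 j, ∑ y : Fin n → ∀ i, 𝒴 i,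
    ∑ BM : ∀ i, (Fin n → 𝒴 i) → Fin (Mv i), ∑ BF : ∀ i, (Fin n → 𝒴 i) → Fin (Fv i),
      if E x z y BM BF then
        (∏ t, φ (x t, fun j => z j t)) * (∏ t, pY (x t) (y t)) /
          ((Fintype.card (∀ i, (Fin n → 𝒴 i) → Fin (Mv i)) : ℝ) *
            (Fintype.card (∀ i, (Fin n → 𝒴 i) → Fin (Fv i)) : ℝ))
      else 0

/-- Event `𝓔₀`: the joint type of `(X^n, Y^n_{[0:2]})` is entrywise within `δ` of `pXY`. -/
def evE0 (pXY : 𝒳 × (∀ i, 𝒴 i) → ℝ) (δ : ℝ) {n : ℕ}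
    (x : Fin n → 𝒳) (y : Fin n → ∀ i, 𝒴 i) : Prop :=
  ∀ (a : 𝒳) (ys : ∀ i, 𝒴 i),
    |((Finset.univ.filter (fun t : Fin n => x t = a ∧ y t = ys)).card : ℝ) / n -
      pXY (a, ys)| ≤ δ

/-- Entrywise `δ`-typicality of `(y_0^n, y_j^n, z_j^n)` with respect to a pmf `μ` on
`𝒴_0 × 𝒴_j × 𝒵_j`. -/
def typ3 (j : Fin 2) (μ : 𝒴 0 × 𝒴 j.succ × 𝒵 j → ℝ) (δ : ℝ) {n : ℕ}
    (y0 : Fin n → 𝒴 0) (yj : Fin n → 𝒴 j.succ) (zj : Fin n → 𝒵 j) : Prop :=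
  ∀ (u0 : 𝒴 0) (uj : 𝒴 j.succ) (c : 𝒵 j),
    |((Finset.univ.filter
        (fun t : Fin n => y0 t = u0 ∧ yj t = uj ∧ zj t = c)).card : ℝ) / n -
      μ (u0, uj, c)| ≤ δ

/-- The single-letter pmf `p_{Y_0,Y_j,Z_j}(y_0,y_j,z_j) = ∑_x p(x,z_j)·p(y_0,y_j|x)`. -/
noncomputable def pYYZ (p : 𝒳 × (∀ j, 𝒵 j) → ℝ) (pY : 𝒳 → (∀ i, 𝒴 i) → ℝ)
    (j : Fin 2) (w : 𝒴 0 × 𝒴 j.succ × 𝒵 j) : ℝ :=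
  ∑ a : 𝒳, (∑ zz : ∀ j', 𝒵 j', if zz j = w.2.2 then p (a, zz) else 0) *
    (∑ ys : ∀ i, 𝒴 i, if ys 0 = w.1 ∧ ys j.succ = w.2.1 then pY a ys else 0)

/-- Event `𝓔_j`: some pair `(ỹ_0^n, ỹ_j^n)` matches all four bin indices of the true
`(Y_0^n, Y_j^n)` and is jointly `δ`-typical with `Z_j^n`. -/
def evEj (p : 𝒳 × (∀ j, 𝒵 j) → ℝ) (pY : 𝒳 → (∀ i, 𝒴 i) → ℝ) (j : Fin 2) (δ : ℝ)
    {Mv Fv : Fin 3 → ℕ} {n : ℕ}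
    (z : ∀ j', Fin n → 𝒵 j') (y : Fin n → ∀ i, 𝒴 i)
    (BM : ∀ i, (Fin n → 𝒴 i) → Fin (Mv i)) (BF : ∀ i, (Fin n → 𝒴 i) → Fin (Fv i)) :
    Prop :=
  ∃ (y0' : Fin n → 𝒴 0) (yj' : Fin n → 𝒴 j.succ),
    BM 0 y0' = BM 0 (fun t => y t 0) ∧ BF 0 y0' = BF 0 (fun t => y t 0) ∧
    BM j.succ yj' = BM j.succ (fun t => y t j.succ) ∧
    BF j.succ yj' = BF j.succ (fun t => y t j.succ) ∧
    typ3 𝒵 𝒴 j (pYYZ 𝒵 𝒴 p pY j) δ y0' yj' (z j)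

end ProtocolA

/-- Event `Ψ_{0,j}`: the type of `Z_j^n` is entrywise within `δ` of `p_{Z_j}`. -/
def evPsi0 {𝒵j : Type*} [Fintype 𝒵j] (pZj : 𝒵j → ℝ) (δ : ℝ) {n : ℕ}
    (zj : Fin n → 𝒵j) : Prop :=
  ∀ c : 𝒵j,
    |((Finset.univ.filter (fun t : Fin n => zj t = c)).card : ℝ) / n - pZj c| ≤ δ

/-- Event `𝓔_{j,NS,0}`: some `ỹ_0^n ≠ Y_0^n` and `ỹ_j^n ≠ Y_j^n` match all four bin
indices and are jointly `δ`-typical with `Z_j^n`. -/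
def evENS0 {𝒳 : Type*} [Fintype 𝒳] (𝒵 : Fin 2 → Type*) [∀ j, Fintype (𝒵 j)]
    (𝒴 : Fin 3 → Type*) [∀ i, Fintype (𝒴 i)] [∀ i, DecidableEq (𝒴 i)]
    (p : 𝒳 × (∀ j, 𝒵 j) → ℝ) (pY : 𝒳 → (∀ i, 𝒴 i) → ℝ) (j : Fin 2) (δ : ℝ)
    {Mv Fv : Fin 3 → ℕ} {n : ℕ}
    (z : ∀ j', Fin n → 𝒵 j') (y : Fin n → ∀ i, 𝒴 i)
    (BM : ∀ i, (Fin n → 𝒴 i) → Fin (Mv i)) (BF : ∀ i, (Fin n → 𝒴 i) → Fin (Fv i)) :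
    Prop :=
  ∃ (y0' : Fin n → 𝒴 0) (yj' : Fin n → 𝒴 j.succ),
    y0' ≠ (fun t => y t 0) ∧ yj' ≠ (fun t => y t j.succ) ∧
    BM 0 y0' = BM 0 (fun t => y t 0) ∧ BF 0 y0' = BF 0 (fun t => y t 0) ∧
    BM j.succ yj' = BM j.succ (fun t => y t j.succ) ∧
    BF j.succ yj' = BF j.succ (fun t => y t j.succ) ∧
    typ3 𝒵 𝒴 j (pYYZ 𝒵 𝒴 p pY j) δ y0' yj' (z j)


lemma ite_cong' {P Q : Prop} {i1 : Decidable P} {i2 : Decidable Q} (h : P ↔ Q) {a b : ℝ} :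
    @ite ℝ P i1 a b = @ite ℝ Q i2 a b := by
  by_cases hP : P
  · rw [if_pos hP, if_pos (h.mp hP)]
  · rw [if_neg hP, if_neg (fun hq => hP (h.mpr hq))]

/-- Sum over functions of the indicator that two distinct points collide. -/
lemma sum1 {α β : Type*} [Fintype α] [DecidableEq α] [Fintype β] {a b : α} (hab : a ≠ b) :
    (∑ g : α → β, if g a = g b then (1:ℝ) else 0) * (Fintype.card β) =
      Fintype.card (α → β) := by
  classical
  have h1 : (∑ g : α → β, if g a = g b then (1:ℝ) else 0)
      = ∑ q : β × ({ j // j ≠ a } → β), (if q.1 = q.2 ⟨b, hab.symm⟩ then (1:ℝ) else 0) := by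
    rw [← Equiv.sum_comp (Equiv.funSplitAt a β) (fun q : β × ({ j // j ≠ a } → β) =>
      (if q.1 = q.2 ⟨b, hab.symm⟩ then (1:ℝ) else 0))]
    rfl
  rw [h1, Fintype.sum_prod_type_right]
  have h2 : ∀ h : { j // j ≠ a } → β,
      (∑ v : β, if v = h ⟨b, hab.symm⟩ then (1:ℝ) else 0) = 1 := by
    intro h; simp
  simp_rw [h2]
  simp only [Finset.sum_const, Finset.card_univ, nsmul_eq_mul, mul_one]
  rw [← Nat.cast_mul]
  congr 1
  rw [Fintype.card_fun, Fintype.card_fun]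
  have : Fintype.card { j // j ≠ a } = Fintype.card α - 1 := by
    rw [Fintype.card_subtype_compl]
    simp [Fintype.card_subtype_eq]
  rw [this, ← pow_succ]
  congr 1
  have : 0 < Fintype.card α := Fintype.card_pos_iff.mpr ⟨a⟩
  omega

/-- Collision probability for two independent coordinates of a random pi-type binning. -/
lemma pi2 {ι : Type*} [Fintype ι] [DecidableEq ι] (γ : ι → Type*) [∀ i, Fintype (γ i)]
    [∀ i, DecidableEq (γ i)] (κ : ι → Type*) [∀ i, Fintype (κ i)]
    {i₀ i₁ : ι} (hne : i₀ ≠ i₁) {a b : γ i₀} (hab : a ≠ b) {c d : γ i₁} (hcd : c ≠ d)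
    {dec : ∀ B : ∀ i, γ i → κ i, Decidable (B i₀ a = B i₀ b ∧ B i₁ c = B i₁ d)} :
    (∑ B : ∀ i, γ i → κ i, @ite ℝ (B i₀ a = B i₀ b ∧ B i₁ c = B i₁ d) (dec B) 1 0) *
      ((Fintype.card (κ i₀)) * (Fintype.card (κ i₁))) =
      Fintype.card (∀ i, γ i → κ i) := by
  classical
  have hnorm : (∑ B : ∀ i, γ i → κ i, @ite ℝ (B i₀ a = B i₀ b ∧ B i₁ c = B i₁ d) (dec B) 1 0)
      = ∑ B : ∀ i, γ i → κ i, (if (B i₀ a = B i₀ b ∧ B i₁ c = B i₁ d) then (1:ℝ) else 0) :=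
    Finset.sum_congr rfl fun B _ => ite_cong' Iff.rfl
  rw [hnorm]
  set ι₁ : {i // i ≠ i₀} := ⟨i₁, hne.symm⟩ with hι₁
  have h1 : (∑ B : ∀ i, γ i → κ i, if (B i₀ a = B i₀ b ∧ B i₁ c = B i₁ d) then (1:ℝ) else 0)
      = ∑ q : (γ i₀ → κ i₀) × (∀ i : {i // i ≠ i₀}, γ i → κ i),
          (if q.1 a = q.1 b then (1:ℝ) else 0) *
          (if q.2 ι₁ c = q.2 ι₁ d then (1:ℝ) else 0) := by
    rw [← Equiv.sum_comp (Equiv.piSplitAt i₀ (fun i => γ i → κ i))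
      (fun q : (γ i₀ → κ i₀) × (∀ i : {i // i ≠ i₀}, γ i → κ i) =>
        (if q.1 a = q.1 b then (1:ℝ) else 0) * (if q.2 ι₁ c = q.2 ι₁ d then (1:ℝ) else 0))]
    refine Finset.sum_congr rfl fun B _ => ?_
    by_cases h1 : B i₀ a = B i₀ b <;> by_cases h2 : B i₁ c = B i₁ d <;>
      simp [Equiv.piSplitAt, h1, h2, hι₁] <;> exact h2
  rw [h1, Fintype.sum_prod_type]
  have hfact : (∑ x : γ i₀ → κ i₀,
        ∑ y : (i : { i // i ≠ i₀ }) → γ (i:{i // i ≠ i₀}) → κ (i:{i // i ≠ i₀}),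
          (if x a = x b then (1:ℝ) else 0) * if y ι₁ c = y ι₁ d then (1:ℝ) else 0)
      = (∑ x : γ i₀ → κ i₀, if x a = x b then (1:ℝ) else 0) *
        (∑ y : (i : { i // i ≠ i₀ }) → γ (i:{i // i ≠ i₀}) → κ (i:{i // i ≠ i₀}),
          if y ι₁ c = y ι₁ d then (1:ℝ) else 0) := by
    rw [Finset.sum_mul]
    exact Finset.sum_congr rfl fun x _ => by rw [Finset.mul_sum]
  rw [hfact]
  have h2 : (∑ B' : ∀ i : {i // i ≠ i₀}, γ i → κ i, if B' ι₁ c = B' ι₁ d then (1:ℝ) else 0)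
      = ∑ q : (γ ι₁ → κ ι₁) × (∀ i : {i // i ≠ ι₁}, γ (i:{i // i ≠ i₀}) → κ (i:{i // i ≠ i₀})),
          (if q.1 c = q.1 d then (1:ℝ) else 0) := by
    rw [← Equiv.sum_comp (Equiv.piSplitAt ι₁ (fun i : {i // i ≠ i₀} => γ i → κ i))
      (fun q => (if q.1 c = q.1 d then (1:ℝ) else 0))]
    rfl
  rw [h2, Fintype.sum_prod_type_right]
  simp only [Finset.sum_const, Finset.card_univ, nsmul_eq_mul]
  -- now: (S₀ * (card rest * S₁')) * (card κ i₀ * card κ i₁) = card pi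
  have k0 := sum1 (β := κ i₀) hab
  have k1 := sum1 (β := κ i₁) hcd
  have hcard : Fintype.card (∀ i, γ i → κ i)
      = Fintype.card (γ i₀ → κ i₀) * (Fintype.card (γ i₁ → κ i₁) *
          Fintype.card (∀ i : {i // i ≠ ι₁}, γ (i:{i // i ≠ i₀}) → κ (i:{i // i ≠ i₀}))) := by
    rw [Fintype.card_congr (Equiv.piSplitAt i₀ (fun i => γ i → κ i)), Fintype.card_prod,
      Fintype.card_congr (Equiv.piSplitAt ι₁ (fun i : {i // i ≠ i₀} => γ i → κ i)),
      Fintype.card_prod]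
  rw [hcard]
  push_cast
  rw [← k0, ← k1]
  simp only [Finset.sum_const, Finset.card_univ, nsmul_eq_mul, Finset.sum_boole]
  ring

/-- Upper semicontinuity-style entry bound for `x ↦ x log v + negMulLog x`. -/
lemma entry_bound (x₀ v₀ : ℝ) (hx₀ : 0 ≤ x₀) (hxv₀ : x₀ ≤ v₀) {ε : ℝ} (hε : 0 < ε) :
    ∃ δ > 0, ∀ x v : ℝ, 0 ≤ x → x ≤ v → |x - x₀| ≤ δ → |v - v₀| ≤ δ →
      x * Real.log v + Real.negMulLog x ≤ x₀ * Real.log v₀ + Real.negMulLog x₀ + ε := by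
  rcases lt_or_ge 0 v₀ with hv₀ | hv₀
  · -- continuous case
    have hcont : ContinuousAt (fun p : ℝ × ℝ => p.1 * Real.log p.2 + Real.negMulLog p.1)
        (x₀, v₀) := by
      apply ContinuousAt.add
      · exact (continuousAt_fst).mul (continuousAt_snd.log hv₀.ne')
      · exact Real.continuous_negMulLog.continuousAt.comp continuousAt_fst
    rw [Metric.continuousAt_iff] at hcont
    obtain ⟨δ', hδ', hd⟩ := hcont ε hε
    refine ⟨δ'/2, by positivity, fun x v _ _ hx hv => ?_⟩
    have : dist ((x,v) : ℝ × ℝ) (x₀, v₀) < δ' := by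
      rw [Prod.dist_eq]
      apply max_lt <;> [skip; skip] <;>
        simp only [Real.dist_eq] <;> [exact lt_of_le_of_lt hx (by linarith);
          exact lt_of_le_of_lt hv (by linarith)]
    have := hd this
    rw [Real.dist_eq] at this
    have := abs_lt.mp this
    linarith [this.1, this.2]
  · -- v₀ = 0 hence x₀ = 0
    have hv0 : v₀ = 0 := le_antisymm hv₀ (le_trans hx₀ hxv₀)
    have hx0 : x₀ = 0 := le_antisymm (hv0 ▸ hxv₀) hx₀
    have hcont : ContinuousAt Real.negMulLog 0 := Real.continuous_negMulLog.continuousAt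
    rw [Metric.continuousAt_iff] at hcont
    obtain ⟨δ', hδ', hd⟩ := hcont ε hε
    refine ⟨min (δ'/2) 1, by positivity, fun x v hx hxv hxd hvd => ?_⟩
    have hv1 : v ≤ 1 := by
      have := abs_le.mp hvd
      have h2 : min (δ'/2) 1 ≤ 1 := min_le_right _ _
      linarith [this.2]
    have h1 : x * Real.log v ≤ 0 :=
      mul_nonpos_of_nonneg_of_nonpos hx (Real.log_nonpos (le_trans hx hxv) hv1)
    have h2 : Real.negMulLog x < ε := by
      have hxd' : dist x 0 < δ' := by
        rw [Real.dist_eq, sub_zero]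
        have := abs_le.mp hxd
        have h3 : min (δ'/2) 1 ≤ δ'/2 := min_le_left _ _
        rw [abs_of_nonneg hx]
        rw [hx0, sub_zero, abs_of_nonneg hx] at hxd
        linarith
      have := hd hxd'
      rw [Real.dist_eq, Real.negMulLog_zero, sub_zero] at this
      exact lt_of_le_of_lt (le_abs_self _) this
    rw [hx0, hv0]
    simp only [zero_mul, Real.negMulLog_zero, zero_add, add_zero]
    linarith

/-- A positive lower bound for finitely many positive reals. -/
lemma exists_pos_min {ι : Type*} [Fintype ι] (d : ι → ℝ) (hd : ∀ i, 0 < d i) :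
    ∃ δ > 0, ∀ i, δ ≤ d i := by
  classical
  cases isEmpty_or_nonempty ι with
  | inl h => exact ⟨1, one_pos, fun i => (IsEmpty.false i).elim⟩
  | inr h =>
    have hs : (Finset.univ.image d).Nonempty :=
      ⟨d h.some, Finset.mem_image_of_mem d (Finset.mem_univ _)⟩
    refine ⟨(Finset.univ.image d).min' hs, ?_, fun i => Finset.min'_le _ _
      (Finset.mem_image_of_mem d (Finset.mem_univ _))⟩
    obtain ⟨i, _, hi⟩ := Finset.mem_image.mp ((Finset.univ.image d).min'_mem hs)
    rw [← hi]; exact hd i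

/-- Uniform upper bound on the empirical conditional entropy functional near `μ`. -/
lemma master_bound {T C : Type*} [Fintype T] [Fintype C] [DecidableEq C] (π : T → C)
    (μ : T → ℝ) (hμ : ∀ τ, 0 ≤ μ τ) {ε : ℝ} (hε : 0 < ε) :
    ∃ δ > 0, ∀ u : T → ℝ, (∀ τ, 0 ≤ u τ) → (∀ τ, |u τ - μ τ| ≤ δ) →
      (∑ τ, (u τ * Real.log (∑ τ' ∈ Finset.univ.filter (fun τ' => π τ' = π τ), u τ') +
        Real.negMulLog (u τ))) ≤
      (∑ τ, (μ τ * Real.log (∑ τ' ∈ Finset.univ.filter (fun τ' => π τ' = π τ), μ τ') +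
        Real.negMulLog (μ τ))) + ε := by
  classical
  set K := Fintype.card T with hK
  have hεK : 0 < ε / (K + 1) := by positivity
  have hsingle : ∀ (w : T → ℝ), (∀ τ, 0 ≤ w τ) → ∀ τ : T,
      w τ ≤ ∑ τ' ∈ Finset.univ.filter (fun τ' => π τ' = π τ), w τ' := by
    intro w hw τ
    exact Finset.single_le_sum (fun τ' _ => hw τ')
      (Finset.mem_filter.mpr ⟨Finset.mem_univ _, rfl⟩)
  have h := fun τ : T => entry_bound (μ τ)
    (∑ τ' ∈ Finset.univ.filter (fun τ' => π τ' = π τ), μ τ') (hμ τ)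
    (hsingle μ hμ τ) hεK
  choose d hd hprop using h
  obtain ⟨δ₀, hδ₀, hδ₀le⟩ := exists_pos_min d hd
  refine ⟨δ₀ / (K + 1), by positivity, fun u hu hclose => ?_⟩
  have hδle : δ₀ / (K + 1) ≤ δ₀ := by
    rw [div_le_iff₀ (by positivity)]
    nlinarith
  have key : ∀ τ : T,
      u τ * Real.log (∑ τ' ∈ Finset.univ.filter (fun τ' => π τ' = π τ), u τ') +
        Real.negMulLog (u τ) ≤
      μ τ * Real.log (∑ τ' ∈ Finset.univ.filter (fun τ' => π τ' = π τ), μ τ') +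
        Real.negMulLog (μ τ) + ε / (K + 1) := by
    intro τ
    apply hprop τ (u τ) _ (hu τ) (hsingle u hu τ)
    · exact le_trans (hclose τ) (le_trans hδle (hδ₀le τ))
    · -- marginal closeness
      have habs : |(∑ τ' ∈ Finset.univ.filter (fun τ' => π τ' = π τ), u τ') -
          (∑ τ' ∈ Finset.univ.filter (fun τ' => π τ' = π τ), μ τ')| ≤
          (K : ℝ) * (δ₀ / (K + 1)) := by
        rw [← Finset.sum_sub_distrib]
        refine le_trans (Finset.abs_sum_le_sum_abs _ _) ?_
        refine le_trans (Finset.sum_le_sum (fun τ' _ => hclose τ')) ?_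
        rw [Finset.sum_const, nsmul_eq_mul]
        have : ((Finset.univ.filter (fun τ' => π τ' = π τ)).card : ℝ) ≤ K := by
          exact_mod_cast Finset.card_filter_le _ _
        have hnn : (0:ℝ) ≤ δ₀ / (K + 1) := by positivity
        nlinarith
      refine le_trans habs ?_
      refine le_trans ?_ (hδ₀le τ)
      have he : (K:ℝ) * (δ₀/(K+1)) = (K*δ₀)/(K+1) := by ring
      rw [he, div_le_iff₀ (by positivity)]
      nlinarith
  calc (∑ τ, (u τ * Real.log (∑ τ' ∈ Finset.univ.filter (fun τ' => π τ' = π τ), u τ') +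
        Real.negMulLog (u τ)))
      ≤ ∑ τ, (μ τ * Real.log (∑ τ' ∈ Finset.univ.filter (fun τ' => π τ' = π τ), μ τ') +
        Real.negMulLog (μ τ) + ε / (K + 1)) := Finset.sum_le_sum (fun τ _ => key τ)
    _ = (∑ τ, (μ τ * Real.log (∑ τ' ∈ Finset.univ.filter (fun τ' => π τ' = π τ), μ τ') +
        Real.negMulLog (μ τ))) + K * (ε / (K + 1)) := by
        rw [Finset.sum_add_distrib, Finset.sum_const, Finset.card_univ, nsmul_eq_mul]
    _ ≤ _ := by
        have : (K:ℝ) * (ε / (K + 1)) ≤ ε := by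
          have he : (K:ℝ) * (ε/(K+1)) = (K*ε)/(K+1) := by ring
          rw [he, div_le_iff₀ (by positivity)]
          nlinarith
        linarith

/-- The number of sequences with a given conditional type `k` relative to `zj` is at most
the exponential of the empirical conditional entropy. -/
lemma fiber_card_le {A Cc : Type*} [Fintype A] [Fintype Cc] [DecidableEq A] [DecidableEq Cc]
    {n : ℕ} (zj : Fin n → Cc) (k : A × Cc → ℕ) :
    (((Finset.univ.filter (fun w : Fin n → A => ∀ τ : A × Cc,
      (Finset.univ.filter (fun t => w t = τ.1 ∧ zj t = τ.2)).card = k τ)).card : ℝ))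
    ≤ Real.exp (∑ τ : A × Cc, ((k τ : ℝ) * Real.log (∑ a : A, (k (a, τ.2) : ℝ)) -
        (k τ : ℝ) * Real.log (k τ))) := by
  classical
  set fib := Finset.univ.filter (fun w : Fin n → A => ∀ τ : A × Cc,
      (Finset.univ.filter (fun t => w t = τ.1 ∧ zj t = τ.2)).card = k τ) with hfib
  rcases Finset.eq_empty_or_nonempty fib with hemp | ⟨w₀, hw₀⟩
  · rw [hemp]; simp [Real.exp_pos, le_of_lt (Real.exp_pos _)]
  have hw₀' : ∀ τ : A × Cc,
      (Finset.univ.filter (fun t => w₀ t = τ.1 ∧ zj t = τ.2)).card = k τ :=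
    (Finset.mem_filter.mp hw₀).2
  -- marginal identity
  have hmarg : ∀ c : Cc, (∑ a : A, (k (a, c) : ℝ)) =
      ((Finset.univ.filter (fun t => zj t = c)).card : ℝ) := by
    intro c
    have hpart : (Finset.univ.filter (fun t => zj t = c)).card =
        ∑ a : A, ((Finset.univ.filter (fun t => zj t = c)).filter
          (fun t => w₀ t = a)).card := by
      exact Finset.card_eq_sum_card_fiberwise (fun t _ => Finset.mem_univ (w₀ t))
    have heq : ∀ a : A, ((Finset.univ.filter (fun t => zj t = c)).filter
        (fun t => w₀ t = a)) = Finset.univ.filter (fun t => w₀ t = a ∧ zj t = c) := by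
      intro a
      rw [Finset.filter_filter]
      exact Finset.filter_congr (fun t _ => by tauto)
    push_cast [hpart]
    refine Finset.sum_congr rfl fun a _ => ?_
    rw [heq a, hw₀' (a, c)]
  set mR : Cc → ℝ := fun c => ∑ a : A, (k (a, c) : ℝ) with hmR
  have hmnn : ∀ c, 0 ≤ mR c := fun c => Finset.sum_nonneg (fun a _ => by positivity)
  have hklem : ∀ τ : A × Cc, (k τ : ℝ) ≤ mR τ.2 := by
    intro τ
    exact Finset.single_le_sum (f := fun a => (k (a, τ.2) : ℝ))
      (fun a _ => by positivity) (Finset.mem_univ τ.1)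
  set V : A × Cc → ℝ := fun τ => (k τ : ℝ) / mR τ.2 with hV
  have hVnn : ∀ τ, 0 ≤ V τ := fun τ => div_nonneg (by positivity) (hmnn _)
  -- identity 1
  have hS : (∑ w : Fin n → A, ∏ t, V (w t, zj t)) = 1 := by
    have h1 : ∀ t : Fin n, (∑ a : A, V (a, zj t)) = 1 := by
      intro t
      have hm : mR (zj t) ≠ 0 := by
        rw [hmR]
        simp only
        rw [hmarg]
        have ht : t ∈ Finset.univ.filter (fun t' => zj t' = zj t) :=
          Finset.mem_filter.mpr ⟨Finset.mem_univ _, rfl⟩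
        exact Nat.cast_ne_zero.mpr (Finset.card_pos.mpr ⟨t, ht⟩).ne'
      calc ∑ a : A, V (a, zj t) = (∑ a : A, (k (a, zj t):ℝ)) / mR (zj t) := by
            rw [Finset.sum_div]
        _ = mR (zj t) / mR (zj t) := rfl
        _ = 1 := div_self hm
    rw [← Fintype.prod_sum (f := fun (t : Fin n) (a : A) => V (a, zj t))]
    exact Finset.prod_eq_one (fun t _ => h1 t)
  -- identity 2: each fiber element contributes the same product
  have hprod : ∀ w ∈ fib, (∏ t, V (w t, zj t)) = ∏ τ : A × Cc, V τ ^ (k τ) := by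
    intro w hw
    have hwk : ∀ τ : A × Cc,
        (Finset.univ.filter (fun t => w t = τ.1 ∧ zj t = τ.2)).card = k τ :=
      (Finset.mem_filter.mp hw).2
    have h2 := Finset.prod_comp (s := (Finset.univ : Finset (Fin n))) V
      (fun t => (w t, zj t))
    rw [h2]
    have hcnt : ∀ b : A × Cc,
        (Finset.univ.filter (fun t => (w t, zj t) = b)).card = k b := by
      intro b
      rw [← hwk b]
      congr 1
      exact Finset.filter_congr (fun t _ => by rw [Prod.ext_iff])
    calc ∏ b ∈ Finset.univ.image (fun t => (w t, zj t)),
          V b ^ (Finset.univ.filter (fun t => (w t, zj t) = b)).card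
        = ∏ b ∈ Finset.univ.image (fun t => (w t, zj t)), V b ^ k b :=
          Finset.prod_congr rfl fun b _ => by rw [hcnt b]
      _ = ∏ τ : A × Cc, V τ ^ k τ := by
          refine Finset.prod_subset (Finset.subset_univ _) (fun b _ hb => ?_)
          have hz : k b = 0 := by
            rw [← hcnt b, Finset.card_eq_zero, Finset.filter_eq_empty_iff]
            intro t _ h
            exact hb (Finset.mem_image.mpr ⟨t, Finset.mem_univ _, h⟩)
          rw [hz, pow_zero]
  -- the common product equals exp(-E)
  set E : ℝ := ∑ τ : A × Cc, ((k τ : ℝ) * Real.log (∑ a : A, (k (a, τ.2) : ℝ)) -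
      (k τ : ℝ) * Real.log (k τ)) with hE
  have hPE : (∏ τ : A × Cc, V τ ^ (k τ)) = Real.exp (-E) := by
    have h3 : ∀ τ : A × Cc, V τ ^ (k τ) =
        Real.exp ((k τ : ℝ) * Real.log (k τ) - (k τ : ℝ) * Real.log (mR τ.2)) := by
      intro τ
      rcases Nat.eq_zero_or_pos (k τ) with hk0 | hkpos
      · rw [hk0]; simp
      · have hkR : (0:ℝ) < (k τ : ℝ) := by exact_mod_cast hkpos
        have hmpos : (0:ℝ) < mR τ.2 := lt_of_lt_of_le hkR (hklem τ)
        have hVpos : 0 < V τ := div_pos hkR hmpos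
        rw [← Real.exp_log hVpos, ← Real.exp_nat_mul]
        congr 1
        rw [hV]
        simp only
        rw [Real.log_div hkR.ne' hmpos.ne']
        ring
    rw [Finset.prod_congr rfl (fun τ _ => h3 τ), ← Real.exp_sum]
    congr 1
    rw [hE, ← Finset.sum_neg_distrib]
    exact Finset.sum_congr rfl fun τ _ => by rw [hmR]; simp only; ring
  -- put it together
  have hmain : (fib.card : ℝ) * Real.exp (-E) ≤ 1 := by
    rw [← hS]
    calc (fib.card : ℝ) * Real.exp (-E)
        = ∑ w ∈ fib, Real.exp (-E) := by rw [Finset.sum_const, nsmul_eq_mul]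
      _ = ∑ w ∈ fib, ∏ t, V (w t, zj t) := by
          refine Finset.sum_congr rfl fun w hw => ?_
          rw [hprod w hw, hPE]
      _ ≤ ∑ w : Fin n → A, ∏ t, V (w t, zj t) := by
          refine Finset.sum_le_sum_of_subset_of_nonneg (Finset.subset_univ _) ?_
          intro w _ _
          exact Finset.prod_nonneg (fun t _ => hVnn _)
  have hexp : (0:ℝ) < Real.exp (-E) := Real.exp_pos _
  calc (fib.card : ℝ) = (fib.card : ℝ) * Real.exp (-E) * Real.exp E := by
        rw [mul_assoc, ← Real.exp_add]; simp
    _ ≤ 1 * Real.exp E := by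
        exact mul_le_mul_of_nonneg_right hmain (le_of_lt (Real.exp_pos _))
    _ = Real.exp E := one_mul _

lemma ite_le_ite_of_imp {P P' : Prop} {i1 : Decidable P} {i2 : Decidable P'} (h : P → P') :
    (@ite ℝ P i1 1 0) ≤ (@ite ℝ P' i2 1 0) := by
  by_cases hP : P
  · rw [if_pos hP, if_pos (h hP)]
  · rw [if_neg hP]; positivity

lemma ite_exists_le_sum {α : Type*} (s : Finset α) (Q : α → Prop)
    [inst : Decidable (∃ p ∈ s, Q p)] [inst2 : ∀ p, Decidable (Q p)] :
    (if (∃ p ∈ s, Q p) then (1:ℝ) else 0) ≤ ∑ p ∈ s, if Q p then (1:ℝ) else 0 := by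
  classical
  by_cases h : ∃ p ∈ s, Q p
  · obtain ⟨p, hp, hQ⟩ := h
    rw [if_pos ⟨p, hp, hQ⟩]
    calc (1:ℝ) = if Q p then (1:ℝ) else 0 := by rw [if_pos hQ]
      _ ≤ _ := Finset.single_le_sum (f := fun p => if Q p then (1:ℝ) else 0)
          (fun q _ => by positivity) hp
  · rw [if_neg h]
    exact Finset.sum_nonneg (fun q _ => by positivity)

lemma ite_imp_le_sum {P : Prop} {α : Type*} (s : Finset α) (Q : α → Prop)
    {i : Decidable P} {inst2 : ∀ p, Decidable (Q p)} (h : P → ∃ p ∈ s, Q p) :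
    (@ite ℝ P i 1 0) ≤ ∑ p ∈ s, @ite ℝ (Q p) (inst2 p) 1 0 := by
  have hnn : ∀ q ∈ s, (0:ℝ) ≤ @ite ℝ (Q q) (inst2 q) 1 0 := by
    intro q _
    by_cases hq : Q q
    · rw [if_pos hq]; norm_num
    · rw [if_neg hq]
  by_cases hP : P
  · rw [if_pos hP]
    obtain ⟨pp, hp, hQ⟩ := h hP
    calc (1:ℝ) = @ite ℝ (Q pp) (inst2 pp) 1 0 := (if_pos hQ).symm
      _ ≤ _ := Finset.single_le_sum hnn hp
  · rw [if_neg hP]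
    exact Finset.sum_nonneg hnn

lemma ite_and_mul' {P Q : Prop} {i1 : Decidable (P ∧ Q)} {i2 : Decidable P}
    {i3 : Decidable Q} (c : ℝ) :
    (@ite ℝ (P ∧ Q) i1 c 0) = (@ite ℝ P i2 1 0) * (@ite ℝ Q i3 c 0) := by
  by_cases hP : P <;> by_cases hQ : Q
  · rw [if_pos ⟨hP, hQ⟩, if_pos hP, if_pos hQ, one_mul]
  · rw [if_neg (fun h => hQ h.2), if_pos hP, if_neg hQ, one_mul]
  · rw [if_neg (fun h => hP h.1), if_neg hP, zero_mul]
  · rw [if_neg (fun h => hP h.1), if_neg hP, zero_mul]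

lemma entry_eq (x v : ℝ) (hx : 0 ≤ x) (hxv : x ≤ v) :
    x * Real.log v + Real.negMulLog x = -(x * Real.logb 2 (x / v)) * Real.log 2 := by
  have hl2 : Real.log 2 ≠ 0 := (Real.log_pos (by norm_num)).ne'
  rcases eq_or_lt_of_le hx with hx0 | hxpos
  · rw [← hx0]; simp
  · have hv : 0 < v := lt_of_lt_of_le hxpos hxv
    rw [Real.logb, Real.log_div hxpos.ne' hv.ne', Real.negMulLog]
    field_simp
    ring

lemma entry_nonneg (x v : ℝ) (hx : 0 ≤ x) (hxv : x ≤ v) :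
    0 ≤ x * Real.log v + Real.negMulLog x := by
  rcases eq_or_lt_of_le hx with hx0 | hxpos
  · rw [← hx0]; simp
  · rw [Real.negMulLog]
    have := Real.log_le_log hxpos hxv
    nlinarith

lemma sum_filter_snd {A Cc : Type*} [Fintype A] [Fintype Cc] [DecidableEq Cc]
    (u : A × Cc → ℝ) (c : Cc) :
    ∑ τ' ∈ Finset.univ.filter (fun τ' : A × Cc => τ'.2 = c), u τ' = ∑ a : A, u (a, c) := by
  classical
  rw [Finset.sum_filter, Fintype.sum_prod_type]
  exact Finset.sum_congr rfl fun a _ => by simp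

lemma div_le_of_le_mul' {a b c : ℝ} (ha : 0 ≤ a) (hc : 0 ≤ c) (h : a ≤ c * b) :
    a / b ≤ c := by
  rcases lt_trichotomy b 0 with hb | hb | hb
  · have h1 : c * b ≤ 0 := mul_nonpos_of_nonneg_of_nonpos hc hb.le
    have h2 : a = 0 := le_antisymm (h.trans h1) ha
    rw [h2, zero_div]; exact hc
  · rw [hb, div_zero]; exact hc
  · rw [div_le_iff₀ hb]; linarith [h]

lemma scale_entry (kk m n : ℕ) (hn : 0 < n) (hkm : kk ≤ m) :
    (kk:ℝ) * Real.log m - (kk:ℝ) * Real.log kk =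
      (n:ℝ) * (((kk:ℝ)/n) * Real.log ((m:ℝ)/n) + Real.negMulLog ((kk:ℝ)/n)) := by
  rcases Nat.eq_zero_or_pos kk with hk0 | hkpos
  · rw [hk0]; simp
  · have hkR : (0:ℝ) < kk := by exact_mod_cast hkpos
    have hmR : (0:ℝ) < m := by exact_mod_cast lt_of_lt_of_le hkpos hkm
    have hnR : (0:ℝ) < n := by exact_mod_cast hn
    rw [Real.negMulLog, Real.log_div hmR.ne' hnR.ne', Real.log_div hkR.ne' hnR.ne']
    field_simp
    ring

lemma div_le_one_aux {a b : ℝ} (ha : 0 ≤ a) (h : a ≤ b) : a / b ≤ 1 := by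
  rcases lt_or_ge 0 b with hb | hb
  · rw [div_le_one hb]; exact h
  · have hb0 : b = 0 := le_antisymm hb (le_trans ha h)
    rw [hb0, div_zero]; norm_num


section PrAHelpers

variable {𝒳 : Type*} [Fintype 𝒳] (𝒵 : Fin 2 → Type*) [∀ j, Fintype (𝒵 j)]
  (𝒴 : Fin 3 → Type*) [∀ i, Fintype (𝒴 i)] [∀ i, DecidableEq (𝒴 i)]

lemma prA_nonneg (φ : 𝒳 × (∀ j, 𝒵 j) → ℝ) (pY : 𝒳 → (∀ i, 𝒴 i) → ℝ)
    (hφ : ∀ w, 0 ≤ φ w) (hpY0 : ∀ a ys, 0 ≤ pY a ys) (Mv Fv : Fin 3 → ℕ) (n : ℕ)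
    (E : (Fin n → 𝒳) → (∀ j, Fin n → 𝒵 j) → (Fin n → ∀ i, 𝒴 i) →
      (∀ i, (Fin n → 𝒴 i) → Fin (Mv i)) → (∀ i, (Fin n → 𝒴 i) → Fin (Fv i)) → Prop) :
    0 ≤ prA 𝒵 𝒴 φ pY Mv Fv n E := by
  unfold prA
  refine Finset.sum_nonneg fun x _ => Finset.sum_nonneg fun z _ =>
    Finset.sum_nonneg fun y _ => Finset.sum_nonneg fun BM _ =>
    Finset.sum_nonneg fun BF _ => ?_
  by_cases h : E x z y BM BF
  · rw [if_pos h]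
    apply div_nonneg
    · exact mul_nonneg (Finset.prod_nonneg fun t _ => hφ _)
        (Finset.prod_nonneg fun t _ => hpY0 _ _)
    · positivity
  · rw [if_neg h]

lemma prA_mono (φ : 𝒳 × (∀ j, 𝒵 j) → ℝ) (pY : 𝒳 → (∀ i, 𝒴 i) → ℝ)
    (hφ : ∀ w, 0 ≤ φ w) (hpY0 : ∀ a ys, 0 ≤ pY a ys) (Mv Fv : Fin 3 → ℕ) (n : ℕ)
    (E E' : (Fin n → 𝒳) → (∀ j, Fin n → 𝒵 j) → (Fin n → ∀ i, 𝒴 i) →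
      (∀ i, (Fin n → 𝒴 i) → Fin (Mv i)) → (∀ i, (Fin n → 𝒴 i) → Fin (Fv i)) → Prop)
    (h : ∀ x z y BM BF, E x z y BM BF → E' x z y BM BF) :
    prA 𝒵 𝒴 φ pY Mv Fv n E ≤ prA 𝒵 𝒴 φ pY Mv Fv n E' := by
  unfold prA
  refine Finset.sum_le_sum fun x _ => Finset.sum_le_sum fun z _ =>
    Finset.sum_le_sum fun y _ => Finset.sum_le_sum fun BM _ =>
    Finset.sum_le_sum fun BF _ => ?_
  by_cases hE : E x z y BM BF
  · rw [if_pos hE, if_pos (h _ _ _ _ _ hE)]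
  · rw [if_neg hE]
    by_cases hE' : E' x z y BM BF
    · rw [if_pos hE']
      apply div_nonneg
      · exact mul_nonneg (Finset.prod_nonneg fun t _ => hφ _)
          (Finset.prod_nonneg fun t _ => hpY0 _ _)
      · positivity
    · rw [if_neg hE']

end PrAHelpers

set_option maxHeartbeats 2000000

/-- **binning collision bound in the dual protocol.** Under the
alternative hypothesis, `P_q(𝓔_{j,NS,0} | 𝓔₀ ∧ Ψ_{0,j}) ≤
2^{−n(R_0 + R̃_0 + R_j + R̃_j − H(Y_0,Y_j|Z_j) − η_{0,n})}` for some `η_{0,n} → 0`. -/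
theorem stmt_17 {𝒳 : Type*} [Fintype 𝒳] (𝒵 : Fin 2 → Type*) [∀ j, Fintype (𝒵 j)]
    (𝒴 : Fin 3 → Type*) [∀ i, Fintype (𝒴 i)] [∀ i, DecidableEq (𝒴 i)]
    (p q : 𝒳 × (∀ j, 𝒵 j) → ℝ)
    (hp0 : ∀ w, 0 ≤ p w) (hp1 : ∑ w, p w = 1)
    (hq0 : ∀ w, 0 ≤ q w) (hq1 : ∑ w, q w = 1)
    (hmarg : ∀ a : 𝒳, ∑ zz : ∀ j, 𝒵 j, p (a, zz) = ∑ zz : ∀ j, 𝒵 j, q (a, zz))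
    (pY : 𝒳 → (∀ i, 𝒴 i) → ℝ)
    (hpY0 : ∀ a ys, 0 ≤ pY a ys) (hpY1 : ∀ a, ∑ ys : ∀ i, 𝒴 i, pY a ys = 1)
    (R Rt : Fin 3 → ℝ) (hR : ∀ i, 0 ≤ R i) (hRt : ∀ i, 0 ≤ Rt i)
    (M F : ℕ → Fin 3 → ℕ)
    (hM : ∀ n i, (M n i : ℝ) = 2 ^ ((n : ℝ) * R i))
    (hF : ∀ n i, (F n i : ℝ) = 2 ^ ((n : ℝ) * Rt i))
    (δ' : ℕ → ℝ) (hδ'pos : ∀ n, 0 < δ' n) (hδ'0 : Tendsto δ' atTop (nhds 0))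
    (j : Fin 2) :
    ∃ η : ℕ → ℝ, Tendsto η atTop (nhds 0) ∧
      ∀ n : ℕ,
        prA 𝒵 𝒴 q pY (M n) (F n) n (fun x z y BM BF =>
            evENS0 𝒵 𝒴 p pY j (δ' n) z y BM BF ∧
            evE0 𝒴 (fun w => (∑ zz : ∀ j', 𝒵 j', p (w.1, zz)) * pY w.1 w.2) (δ' n) x y ∧
            evPsi0 (fun c => ∑ a : 𝒳, ∑ zz : ∀ j', 𝒵 j',
              if zz j = c then p (a, zz) else 0) (δ' n) (z j)) /
          prA 𝒵 𝒴 q pY (M n) (F n) n (fun x z y _BM _BF =>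
            evE0 𝒴 (fun w => (∑ zz : ∀ j', 𝒵 j', p (w.1, zz)) * pY w.1 w.2) (δ' n) x y ∧
            evPsi0 (fun c => ∑ a : 𝒳, ∑ zz : ∀ j', 𝒵 j',
              if zz j = c then p (a, zz) else 0) (δ' n) (z j)) ≤
        (2 : ℝ) ^ (-(n : ℝ) * (R 0 + Rt 0 + R j.succ + Rt j.succ -
          (-∑ w : 𝒴 0 × 𝒴 j.succ × 𝒵 j, pYYZ 𝒵 𝒴 p pY j w *
            Real.logb 2 (pYYZ 𝒵 𝒴 p pY j w /
              ∑ u0 : 𝒴 0, ∑ uj : 𝒴 j.succ, pYYZ 𝒵 𝒴 p pY j (u0, uj, w.2.2))) -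
          η n)) := by
  classical
  set μ : 𝒴 0 × 𝒴 j.succ × 𝒵 j → ℝ := pYYZ 𝒵 𝒴 p pY j with hμdef
  set Hent : ℝ := -∑ w : 𝒴 0 × 𝒴 j.succ × 𝒵 j, μ w *
      Real.logb 2 (μ w / ∑ u0 : 𝒴 0, ∑ uj : 𝒴 j.succ, μ (u0, uj, w.2.2)) with hHdef
  have hl2 : (0:ℝ) < Real.log 2 := Real.log_pos (by norm_num)
  have hμnn : ∀ w, 0 ≤ μ w := by
    intro w
    rw [hμdef]
    unfold pYYZ
    refine Finset.sum_nonneg fun a _ => mul_nonneg ?_ ?_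
    · refine Finset.sum_nonneg fun zz _ => ?_
      by_cases h : zz j = w.2.2
      · rw [if_pos h]; exact hp0 _
      · rw [if_neg h]
    · refine Finset.sum_nonneg fun ys _ => ?_
      by_cases h : ys 0 = w.1 ∧ ys j.succ = w.2.1
      · rw [if_pos h]; exact hpY0 _ _
      · rw [if_neg h]
  -- reindexed pmf on (A' × 𝒵 j)
  set μ' : (𝒴 0 × 𝒴 j.succ) × 𝒵 j → ℝ := fun τ => μ (τ.1.1, τ.1.2, τ.2) with hμ'def
  have hμ'nn : ∀ τ, 0 ≤ μ' τ := fun τ => hμnn _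
  -- the conditional entropy functional in natural-log form
  have hGH : (∑ τ : (𝒴 0 × 𝒴 j.succ) × 𝒵 j,
      (μ' τ * Real.log (∑ τ' ∈ Finset.univ.filter
        (fun τ' : (𝒴 0 × 𝒴 j.succ) × 𝒵 j => τ'.2 = τ.2), μ' τ') +
        Real.negMulLog (μ' τ))) = Hent * Real.log 2 := by
    have hmargA : ∀ c : 𝒵 j, (∑ τ' ∈ Finset.univ.filter
        (fun τ' : (𝒴 0 × 𝒴 j.succ) × 𝒵 j => τ'.2 = c), μ' τ')
        = ∑ u0 : 𝒴 0, ∑ uj : 𝒴 j.succ, μ (u0, uj, c) := by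
      intro c
      refine (sum_filter_snd μ' c).trans ?_
      rw [Fintype.sum_prod_type]
    have hle : ∀ τ : (𝒴 0 × 𝒴 j.succ) × 𝒵 j,
        μ' τ ≤ ∑ u0 : 𝒴 0, ∑ uj : 𝒴 j.succ, μ (u0, uj, τ.2) := by
      intro τ
      calc μ' τ ≤ ∑ uj : 𝒴 j.succ, μ (τ.1.1, uj, τ.2) :=
            Finset.single_le_sum (f := fun uj => μ (τ.1.1, uj, τ.2))
              (fun u _ => hμnn _) (Finset.mem_univ τ.1.2)
        _ ≤ _ := Finset.single_le_sum (f := fun u0 => ∑ uj : 𝒴 j.succ, μ (u0, uj, τ.2))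
            (fun u _ => Finset.sum_nonneg fun v _ => hμnn _) (Finset.mem_univ τ.1.1)
    have hperτ : ∀ τ : (𝒴 0 × 𝒴 j.succ) × 𝒵 j,
        μ' τ * Real.log (∑ τ' ∈ Finset.univ.filter
          (fun τ' : (𝒴 0 × 𝒴 j.succ) × 𝒵 j => τ'.2 = τ.2), μ' τ') + Real.negMulLog (μ' τ)
        = -(μ' τ * Real.logb 2 (μ' τ / ∑ u0 : 𝒴 0, ∑ uj : 𝒴 j.succ, μ (u0, uj, τ.2))) *
            Real.log 2 := by
      intro τ
      rw [hmargA τ.2]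
      exact entry_eq _ _ (hμ'nn τ) (hle τ)
    rw [Finset.sum_congr rfl (fun τ _ => hperτ τ), ← Finset.sum_mul]
    congr 1
    rw [hHdef, ← Finset.sum_neg_distrib]
    exact Fintype.sum_equiv (Equiv.prodAssoc (𝒴 0) (𝒴 j.succ) (𝒵 j))
      _ _ (fun τ => rfl)
  have hHnn : 0 ≤ Hent := by
    have h0 : 0 ≤ Hent * Real.log 2 := by
      rw [← hGH]
      refine Finset.sum_nonneg fun τ _ => entry_nonneg _ _ (hμ'nn τ) ?_
      refine le_trans ?_ (sum_filter_snd μ' τ.2).ge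
      rw [Fintype.sum_prod_type]
      calc μ' τ ≤ ∑ uj : 𝒴 j.succ, μ' ((τ.1.1, uj), τ.2) :=
            Finset.single_le_sum (f := fun uj => μ' ((τ.1.1, uj), τ.2))
              (fun u _ => hμ'nn _) (Finset.mem_univ τ.1.2)
        _ ≤ _ := Finset.single_le_sum
            (f := fun u0 => ∑ uj : 𝒴 j.succ, μ' ((u0, uj), τ.2))
            (fun u _ => Finset.sum_nonneg fun v _ => hμ'nn _) (Finset.mem_univ τ.1.1)
    have := div_nonneg h0 hl2.le
    rwa [mul_div_cancel_right₀ _ hl2.ne'] at this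
  set Tm : ℕ → ℕ := fun n => Finset.univ.sup (fun zj : Fin n → 𝒵 j =>
    (Finset.univ.filter (fun pr : (Fin n → 𝒴 0) × (Fin n → 𝒴 j.succ) =>
      typ3 𝒵 𝒴 j μ (δ' n) pr.1 pr.2 zj)).card) with hTmdef
  set η : ℕ → ℝ := fun n => if n = 0 then 0 else
      max 0 (Real.logb 2 (Tm n) / n - Hent) with hηdef
  have hηnn : ∀ n, 0 ≤ η n := by
    intro n
    simp only [hηdef]
    split_ifs
    · exact le_refl 0
    · exact le_max_left _ _
  set KT : ℕ := Fintype.card ((𝒴 0 × 𝒴 j.succ) × 𝒵 j) with hKT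
  -- main counting bound
  have count_bound : ∀ ε' : ℝ, 0 < ε' → ∃ δ > 0, ∀ n : ℕ, δ' n ≤ δ →
      (Tm n : ℝ) ≤ ((n:ℝ)+1)^KT * Real.exp (n * (Hent * Real.log 2 + ε')) := by
    intro ε' hε'
    obtain ⟨δ, hδpos, hδ⟩ :=
      master_bound (Prod.snd : (𝒴 0 × 𝒴 j.succ) × 𝒵 j → 𝒵 j) μ' hμ'nn hε'
    refine ⟨δ, hδpos, fun n hδn => ?_⟩
    have hRHSnn : (0:ℝ) ≤ ((n:ℝ)+1)^KT * Real.exp (n * (Hent * Real.log 2 + ε')) := by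
      positivity
    have hzjbound : ∀ zj : Fin n → 𝒵 j,
        ((Finset.univ.filter (fun pr : (Fin n → 𝒴 0) × (Fin n → 𝒴 j.succ) =>
          typ3 𝒵 𝒴 j μ (δ' n) pr.1 pr.2 zj)).card : ℝ)
        ≤ ((n:ℝ)+1)^KT * Real.exp (n * (Hent * Real.log 2 + ε')) := by
      intro zj
      -- transport to sequences with values in the product alphabet
      set S' : Finset (Fin n → 𝒴 0 × 𝒴 j.succ) :=
        Finset.univ.filter (fun w : Fin n → 𝒴 0 × 𝒴 j.succ =>
          typ3 𝒵 𝒴 j μ (δ' n) (fun t => (w t).1) (fun t => (w t).2) zj) with hS'def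
      have hcardeq : (Finset.univ.filter (fun pr : (Fin n → 𝒴 0) × (Fin n → 𝒴 j.succ) =>
          typ3 𝒵 𝒴 j μ (δ' n) pr.1 pr.2 zj)).card = S'.card := by
        refine Finset.card_nbij' (fun pr => fun t => (pr.1 t, pr.2 t))
          (fun w => (fun t => (w t).1, fun t => (w t).2)) ?_ ?_ ?_ ?_
        · intro pr hpr
          rw [Finset.mem_coe, hS'def, Finset.mem_filter]
          exact ⟨Finset.mem_univ _, (Finset.mem_filter.mp (Finset.mem_coe.mp hpr)).2⟩
        · intro w hw
          rw [Finset.mem_coe, Finset.mem_filter]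
          exact ⟨Finset.mem_univ _, (Finset.mem_filter.mp (Finset.mem_coe.mp hw)).2⟩
        · intro pr _; rfl
        · intro w _; rfl
      rw [hcardeq]
      -- decompose by conditional type
      set kOf : (Fin n → 𝒴 0 × 𝒴 j.succ) → ((𝒴 0 × 𝒴 j.succ) × 𝒵 j → ℕ) :=
        fun w τ => (Finset.univ.filter (fun t => w t = τ.1 ∧ zj t = τ.2)).card with hkOf
      have hdecomp : S'.card = ∑ k ∈ S'.image kOf,
          (S'.filter (fun w => kOf w = k)).card :=
        Finset.card_eq_sum_card_fiberwise (fun w hw => Finset.mem_image_of_mem _ hw)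
      -- per-type bound
      have hper : ∀ k ∈ S'.image kOf,
          ((S'.filter (fun w => kOf w = k)).card : ℝ) ≤
            Real.exp (n * (Hent * Real.log 2 + ε')) := by
        intro k hk
        obtain ⟨w₀, hw₀S, hw₀k⟩ := Finset.mem_image.mp hk
        have hw₀typ : typ3 𝒵 𝒴 j μ (δ' n) (fun t => (w₀ t).1) (fun t => (w₀ t).2) zj :=
          (Finset.mem_filter.mp hw₀S).2
        have hcnt : ∀ τ : (𝒴 0 × 𝒴 j.succ) × 𝒵 j,
            (Finset.univ.filter (fun t => w₀ t = τ.1 ∧ zj t = τ.2)).card = k τ := by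
          intro τ; rw [← hw₀k]
        have hkn : ∀ τ, k τ ≤ n := by
          intro τ
          rw [← hcnt τ]
          exact le_trans (Finset.card_filter_le _ _) (by simp)
        have hsub : (S'.filter (fun w => kOf w = k)).card ≤
            (Finset.univ.filter (fun w : Fin n → 𝒴 0 × 𝒴 j.succ =>
              ∀ τ : (𝒴 0 × 𝒴 j.succ) × 𝒵 j,
                (Finset.univ.filter (fun t => w t = τ.1 ∧ zj t = τ.2)).card = k τ)).card := by
          apply Finset.card_le_card
          intro w hw
          obtain ⟨hwS, hwk⟩ := Finset.mem_filter.mp hw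
          rw [Finset.mem_filter]
          exact ⟨Finset.mem_univ _, fun τ => by rw [← hwk]⟩
        have hfib := fiber_card_le zj k
        have hEbound : (∑ τ : (𝒴 0 × 𝒴 j.succ) × 𝒵 j,
            ((k τ : ℝ) * Real.log (∑ a : 𝒴 0 × 𝒴 j.succ, (k (a, τ.2) : ℝ)) -
              (k τ : ℝ) * Real.log (k τ))) ≤ n * (Hent * Real.log 2 + ε') := by
          rcases Nat.eq_zero_or_pos n with hn0 | hnpos
          · have hk0 : ∀ τ, k τ = 0 := fun τ => Nat.le_zero.mp (hn0 ▸ hkn τ)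
            have : ∀ τ : (𝒴 0 × 𝒴 j.succ) × 𝒵 j,
                ((k τ : ℝ) * Real.log (∑ a : 𝒴 0 × 𝒴 j.succ, (k (a, τ.2) : ℝ)) -
                  (k τ : ℝ) * Real.log (k τ)) = 0 := by
              intro τ; rw [hk0 τ]; simp
            rw [Finset.sum_congr rfl (fun τ _ => this τ), Finset.sum_const_zero, hn0]
            simp
          · set u : (𝒴 0 × 𝒴 j.succ) × 𝒵 j → ℝ := fun τ => (k τ : ℝ) / n with hudef
            have hu0 : ∀ τ, 0 ≤ u τ := fun τ => by positivity
            have huclose : ∀ τ, |u τ - μ' τ| ≤ δ := by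
              intro τ
              have h1 := hw₀typ τ.1.1 τ.1.2 τ.2
              have h2 : (Finset.univ.filter (fun t =>
                  (w₀ t).1 = τ.1.1 ∧ (w₀ t).2 = τ.1.2 ∧ zj t = τ.2)).card = k τ := by
                rw [← hcnt τ]
                congr 1
                apply Finset.filter_congr
                intro t _
                rw [Prod.ext_iff]
                constructor
                · rintro ⟨h3, h4, h5⟩; exact ⟨⟨h3, h4⟩, h5⟩
                · rintro ⟨⟨h3, h4⟩, h5⟩; exact ⟨h3, h4, h5⟩
              rw [h2] at h1
              refine le_trans ?_ hδn
              exact h1.trans_eq' (by rw [hudef])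
            have hmain := hδ u hu0 huclose
            -- identify both sides
            have hGu : (∑ τ : (𝒴 0 × 𝒴 j.succ) × 𝒵 j,
                ((k τ : ℝ) * Real.log (∑ a : 𝒴 0 × 𝒴 j.succ, (k (a, τ.2) : ℝ)) -
                  (k τ : ℝ) * Real.log (k τ)))
                = n * (∑ τ, (u τ * Real.log (∑ τ' ∈ Finset.univ.filter
                    (fun τ' : (𝒴 0 × 𝒴 j.succ) × 𝒵 j => τ'.2 = τ.2), u τ') +
                    Real.negMulLog (u τ))) := by
              rw [Finset.mul_sum]
              refine Finset.sum_congr rfl fun τ _ => ?_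
              have hmarg : (∑ τ' ∈ Finset.univ.filter
                  (fun τ' : (𝒴 0 × 𝒴 j.succ) × 𝒵 j => τ'.2 = τ.2), u τ')
                  = ((∑ a : 𝒴 0 × 𝒴 j.succ, (k (a, τ.2):ℝ)) : ℝ) / n := by
                refine (sum_filter_snd u τ.2).trans ?_
                rw [Finset.sum_div]
              rw [hmarg]
              have hkm : k τ ≤ ∑ a : 𝒴 0 × 𝒴 j.succ, k (a, τ.2) := by
                have := Finset.single_le_sum (f := fun a => k (a, τ.2))
                  (fun a _ => Nat.zero_le _) (Finset.mem_univ τ.1)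
                simpa using this
              have := scale_entry (k τ) (∑ a : 𝒴 0 × 𝒴 j.succ, k (a, τ.2)) n hnpos hkm
              rw [Nat.cast_sum] at this
              exact this.trans (by rw [hudef])
            rw [hGu]
            have h4 : (∑ τ, (u τ * Real.log (∑ τ' ∈ Finset.univ.filter
                (fun τ' : (𝒴 0 × 𝒴 j.succ) × 𝒵 j => τ'.2 = τ.2), u τ') +
                Real.negMulLog (u τ))) ≤ Hent * Real.log 2 + ε' := by
              refine le_trans hmain ?_
              exact add_le_add (le_of_eq hGH) le_rfl
            have hncast : (0:ℝ) ≤ (n:ℝ) := by positivity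
            exact mul_le_mul_of_nonneg_left h4 hncast
        calc ((S'.filter (fun w => kOf w = k)).card : ℝ)
            ≤ ((Finset.univ.filter (fun w : Fin n → 𝒴 0 × 𝒴 j.succ =>
              ∀ τ : (𝒴 0 × 𝒴 j.succ) × 𝒵 j,
                (Finset.univ.filter (fun t => w t = τ.1 ∧ zj t = τ.2)).card = k τ)).card : ℝ) := by
              exact_mod_cast hsub
          _ ≤ Real.exp (∑ τ : (𝒴 0 × 𝒴 j.succ) × 𝒵 j,
                ((k τ : ℝ) * Real.log (∑ a : 𝒴 0 × 𝒴 j.succ, (k (a, τ.2) : ℝ)) -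
                  (k τ : ℝ) * Real.log (k τ))) := hfib
          _ ≤ Real.exp (n * (Hent * Real.log 2 + ε')) := Real.exp_le_exp.mpr hEbound
      -- number of types
      have himg : ((S'.image kOf).card : ℝ) ≤ ((n:ℝ)+1)^KT := by
        have hinj : Set.InjOn (fun k : (𝒴 0 × 𝒴 j.succ) × 𝒵 j → ℕ =>
            (fun τ => (⟨min (k τ) n, by omega⟩ : Fin (n+1))))
            (S'.image kOf : Finset _) := by
          intro k1 hk1 k2 hk2 heq
          have hb : ∀ k' ∈ S'.image kOf, ∀ τ, k' τ ≤ n := by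
            intro k' hk' τ
            obtain ⟨w', _, hw'⟩ := Finset.mem_image.mp hk'
            rw [← hw', hkOf]
            exact le_trans (Finset.card_filter_le _ _) (by simp)
          funext τ
          have h1 := congrFun heq τ
          rw [Fin.mk.injEq] at h1
          have h2 := hb k1 hk1 τ
          have h3 := hb k2 hk2 τ
          omega
        have := Finset.card_le_card_of_injOn _ (fun k _ => Finset.mem_univ
          ((fun τ => (⟨min (k τ) n, by omega⟩ : Fin (n+1))))) hinj
        have hcard : (Finset.univ : Finset ((𝒴 0 × 𝒴 j.succ) × 𝒵 j → Fin (n+1))).card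
            = (n+1)^KT := by
          rw [Finset.card_univ, Fintype.card_fun, Fintype.card_fin, hKT]
        rw [hcard] at this
        calc ((S'.image kOf).card : ℝ) ≤ (((n+1)^KT : ℕ) : ℝ) := by exact_mod_cast this
          _ = ((n:ℝ)+1)^KT := by push_cast; ring
      -- combine
      calc (S'.card : ℝ) = ∑ k ∈ S'.image kOf,
            ((S'.filter (fun w => kOf w = k)).card : ℝ) := by
            rw [hdecomp]; push_cast; rfl
        _ ≤ ∑ k ∈ S'.image kOf, Real.exp (n * (Hent * Real.log 2 + ε')) :=
            Finset.sum_le_sum hper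
        _ = ((S'.image kOf).card : ℝ) * Real.exp (n * (Hent * Real.log 2 + ε')) := by
            rw [Finset.sum_const, nsmul_eq_mul]
        _ ≤ ((n:ℝ)+1)^KT * Real.exp (n * (Hent * Real.log 2 + ε')) :=
            mul_le_mul_of_nonneg_right himg (le_of_lt (Real.exp_pos _))
    rcases Finset.eq_empty_or_nonempty (Finset.univ : Finset (Fin n → 𝒵 j)) with he | hne
    · have hT0 : Tm n = 0 := by rw [hTmdef]; simp only; rw [he]; rfl
      rw [hT0]
      simpa using hRHSnn
    · obtain ⟨zj, _, hzj⟩ := Finset.exists_mem_eq_sup _ hne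
        (fun zj : Fin n → 𝒵 j => (Finset.univ.filter
          (fun pr : (Fin n → 𝒴 0) × (Fin n → 𝒴 j.succ) =>
            typ3 𝒵 𝒴 j μ (δ' n) pr.1 pr.2 zj)).card)
      calc (Tm n : ℝ) = _ := by rw [hTmdef]; simp only; rw [hzj]
        _ ≤ _ := hzjbound zj
  refine ⟨η, ?_, ?_⟩
  · -- Tendsto η atTop (nhds 0)
    rw [Metric.tendsto_atTop]
    intro ε hε
    set ε' := ε * Real.log 2 / 4 with hε'def
    have hε'pos : 0 < ε' := by rw [hε'def]; positivity
    obtain ⟨δ, hδpos, hδb⟩ := count_bound ε' hε'pos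
    have h1 : ∀ᶠ n in atTop, δ' n ≤ δ := by
      obtain ⟨N1, hN1⟩ := Metric.tendsto_atTop.mp hδ'0 δ hδpos
      refine eventually_atTop.mpr ⟨N1, fun n hn => ?_⟩
      have := hN1 n hn
      rw [Real.dist_eq, sub_zero] at this
      exact le_of_lt (lt_of_le_of_lt (le_abs_self _) this)
    have hlogten : Tendsto (fun n : ℕ => Real.log ((n:ℝ)+1) / ((n:ℝ)+1)) atTop (nhds 0) := by
      have hx : Tendsto (fun x : ℝ => Real.log x / x) atTop (nhds 0) := by
        have := Real.tendsto_pow_log_div_mul_add_atTop 1 0 1 one_ne_zero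
        simpa using this
      have hn : Tendsto (fun n : ℕ => (n:ℝ) + 1) atTop atTop :=
        tendsto_atTop_add_const_right atTop 1 tendsto_natCast_atTop_atTop
      exact hx.comp hn
    have h2 : ∀ᶠ n : ℕ in atTop, (KT:ℝ) * Real.log ((n:ℝ)+1) ≤ (n:ℝ) * ε' := by
      have hsmall : ∀ᶠ n : ℕ in atTop,
          Real.log ((n:ℝ)+1) / ((n:ℝ)+1) < ε' / (KT+1) := by
        obtain ⟨N2, hN2⟩ := Metric.tendsto_atTop.mp hlogten (ε' / (KT+1)) (by positivity)
        refine eventually_atTop.mpr ⟨N2, fun n hn => ?_⟩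
        have := hN2 n hn
        rw [Real.dist_eq, sub_zero] at this
        exact lt_of_le_of_lt (le_abs_self _) this
      filter_upwards [hsmall, eventually_ge_atTop KT] with n hs hKTn
      have hn1 : (0:ℝ) < (n:ℝ) + 1 := by positivity
      have hKTn' : (KT:ℝ) ≤ (n:ℝ) := by exact_mod_cast hKTn
      have hlognn : 0 ≤ Real.log ((n:ℝ)+1) := Real.log_nonneg (by linarith)
      have hKTpos : (0:ℝ) < (KT:ℝ) + 1 := by positivity
      have hd : Real.log ((n:ℝ)+1) < ((n:ℝ)+1) * (ε' / (KT+1)) := by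
        rw [div_lt_iff₀ hn1] at hs
        linarith
      have hfrac : (KT:ℝ) * (((n:ℝ)+1) * (ε' / (KT+1))) ≤ (n:ℝ) * ε' := by
        rw [div_eq_mul_inv]
        rw [← sub_nonneg]
        have hexp : (n:ℝ) * ε' - (KT:ℝ) * (((n:ℝ)+1) * (ε' * ((KT:ℝ)+1)⁻¹)) =
            (ε' * (((n:ℝ)*((KT:ℝ)+1) - (KT:ℝ)*((n:ℝ)+1)))) * ((KT:ℝ)+1)⁻¹ := by
          field_simp
        rw [hexp]
        have : (0:ℝ) ≤ (n:ℝ)*((KT:ℝ)+1) - (KT:ℝ)*((n:ℝ)+1) := by nlinarith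
        positivity
      exact le_trans (mul_le_mul_of_nonneg_left hd.le (by positivity : (0:ℝ) ≤ (KT:ℝ)))
        hfrac
    obtain ⟨N1, hN1'⟩ := eventually_atTop.mp h1
    obtain ⟨N2, hN2'⟩ := eventually_atTop.mp h2
    refine ⟨max (max N1 N2) 1, fun n hn => ?_⟩
    have hnN1 : N1 ≤ n := le_trans (le_trans (le_max_left _ _) (le_max_left _ _)) hn
    have hnN2 : N2 ≤ n := le_trans (le_trans (le_max_right _ _) (le_max_left _ _)) hn
    have hn1 : 1 ≤ n := le_trans (le_max_right _ _) hn
    have hn0 : n ≠ 0 := by omega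
    have hnR : (0:ℝ) < n := by exact_mod_cast Nat.pos_of_ne_zero hn0
    rw [Real.dist_eq, sub_zero, abs_of_nonneg (hηnn n)]
    have hηn : η n = max 0 (Real.logb 2 (Tm n) / n - Hent) := by
      rw [hηdef]; simp only; rw [if_neg hn0]
    rw [hηn]
    refine max_lt hε ?_
    rcases Nat.eq_zero_or_pos (Tm n) with hT0 | hTpos
    · rw [hT0]
      simp only [Nat.cast_zero, Real.logb, Real.log_zero, zero_div]
      linarith
    · have hTposR : (0:ℝ) < (Tm n : ℝ) := by exact_mod_cast hTpos
      have hb := hδb n (hN1' n hnN1)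
      have hlogb : Real.log (Tm n : ℝ) ≤
          (KT:ℝ) * Real.log ((n:ℝ)+1) + (n:ℝ) * (Hent * Real.log 2 + ε') := by
        refine le_trans (Real.log_le_log hTposR hb) ?_
        rw [Real.log_mul (by positivity) (Real.exp_pos _).ne', Real.log_pow, Real.log_exp]
      have hlogb2 : Real.log (Tm n : ℝ) ≤
          (n:ℝ) * Hent * Real.log 2 + 2 * ((n:ℝ) * ε') := by
        have := hN2' n hnN2
        nlinarith
      have hfin : Real.logb 2 (Tm n : ℝ) / n - Hent ≤ ε / 2 := by
        have hkey : Real.log (Tm n : ℝ) ≤ ((ε/2 + Hent) * (n:ℝ)) * Real.log 2 := by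
          calc Real.log (Tm n:ℝ) ≤ (n:ℝ)*Hent*Real.log 2 + 2*((n:ℝ)*ε') := hlogb2
            _ = ((ε/2 + Hent) * (n:ℝ)) * Real.log 2 := by rw [hε'def]; ring
        rw [Real.logb, sub_le_iff_le_add, div_le_iff₀ hnR, div_le_iff₀ hl2]
        exact hkey
      linarith [hfin, half_lt_self hε]
    
  · -- the per-n inequality
    intro n
    by_cases hn0 : n = 0
    · subst hn0
      have hRHS : (2:ℝ) ^ (-((0:ℕ):ℝ) * (R 0 + Rt 0 + R j.succ + Rt j.succ - Hent - η 0))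
          = 1 := by
        rw [Nat.cast_zero, neg_zero, zero_mul, Real.rpow_zero]
      rw [hRHS]
      exact div_le_one_aux
        (prA_nonneg 𝒵 𝒴 q pY hq0 hpY0 (M 0) (F 0) 0 _)
        (prA_mono 𝒵 𝒴 q pY hq0 hpY0 (M 0) (F 0) 0 _ _
          (fun x z y BM BF h => h.2))
    · have hnR : (0:ℝ) < n := by exact_mod_cast Nat.pos_of_ne_zero hn0
      by_cases hT0 : Tm n = 0
      · -- numerator vanishes
        have hnum0 : prA 𝒵 𝒴 q pY (M n) (F n) n (fun x z y BM BF =>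
            evENS0 𝒵 𝒴 p pY j (δ' n) z y BM BF ∧
            evE0 𝒴 (fun w => (∑ zz : ∀ j', 𝒵 j', p (w.1, zz)) * pY w.1 w.2) (δ' n) x y ∧
            evPsi0 (fun c => ∑ a : 𝒳, ∑ zz : ∀ j', 𝒵 j',
              if zz j = c then p (a, zz) else 0) (δ' n) (z j)) = 0 := by
          unfold prA
          refine Finset.sum_eq_zero fun x _ => Finset.sum_eq_zero fun z _ =>
            Finset.sum_eq_zero fun y _ => Finset.sum_eq_zero fun BM _ =>
            Finset.sum_eq_zero fun BF _ => ?_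
          rw [if_neg]
          rintro ⟨⟨y0', yj', hne0, hnej, hbm0, hbf0, hbmj, hbfj, htyp⟩, -⟩
          have hmem : (y0', yj') ∈ Finset.univ.filter
              (fun pr : (Fin n → 𝒴 0) × (Fin n → 𝒴 j.succ) =>
                typ3 𝒵 𝒴 j μ (δ' n) pr.1 pr.2 (z j)) :=
            Finset.mem_filter.mpr ⟨Finset.mem_univ _, htyp⟩
          have hcard : 0 < (Finset.univ.filter
              (fun pr : (Fin n → 𝒴 0) × (Fin n → 𝒴 j.succ) =>
                typ3 𝒵 𝒴 j μ (δ' n) pr.1 pr.2 (z j))).card :=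
            Finset.card_pos.mpr ⟨_, hmem⟩
          have hle : (Finset.univ.filter
              (fun pr : (Fin n → 𝒴 0) × (Fin n → 𝒴 j.succ) =>
                typ3 𝒵 𝒴 j μ (δ' n) pr.1 pr.2 (z j))).card ≤ Tm n := by
            have h4 := Finset.le_sup (f := fun zj : Fin n → 𝒵 j =>
              (Finset.univ.filter (fun pr : (Fin n → 𝒴 0) × (Fin n → 𝒴 j.succ) =>
                typ3 𝒵 𝒴 j μ (δ' n) pr.1 pr.2 zj)).card) (Finset.mem_univ (z j))
            rw [hTmdef]
            exact h4
          omega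
        rw [hnum0, zero_div]
        positivity
      · -- main case
        have hTpos : 0 < Tm n := Nat.pos_of_ne_zero hT0
        have hTposR : (0:ℝ) < (Tm n : ℝ) := by exact_mod_cast hTpos
        set Kd : ℝ := (M n 0 : ℝ) * (M n j.succ : ℝ) * (F n 0 : ℝ) * (F n j.succ : ℝ)
          with hKddef
        have hM0pos : (0:ℝ) < (M n 0 : ℝ) := by
          rw [hM n 0]; exact Real.rpow_pos_of_pos (by norm_num) _
        have hMjpos : (0:ℝ) < (M n j.succ : ℝ) := by
          rw [hM n j.succ]; exact Real.rpow_pos_of_pos (by norm_num) _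
        have hF0pos : (0:ℝ) < (F n 0 : ℝ) := by
          rw [hF n 0]; exact Real.rpow_pos_of_pos (by norm_num) _
        have hFjpos : (0:ℝ) < (F n j.succ : ℝ) := by
          rw [hF n j.succ]; exact Real.rpow_pos_of_pos (by norm_num) _
        have hKdpos : (0:ℝ) < Kd := by rw [hKddef]; positivity
        set CMc : ℕ := Fintype.card (∀ i, (Fin n → 𝒴 i) → Fin (M n i)) with hCMc
        set CFc : ℕ := Fintype.card (∀ i, (Fin n → 𝒴 i) → Fin (F n i)) with hCFc
        have hMnz : ∀ i, 0 < M n i := by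
          intro i
          by_contra h
          have : M n i = 0 := by omega
          have h2 := hM n i
          rw [this] at h2
          have := Real.rpow_pos_of_pos (show (0:ℝ) < 2 by norm_num) ((n:ℝ) * R i)
          rw [← h2] at this
          simp at this
        have hFnz : ∀ i, 0 < F n i := by
          intro i
          by_contra h
          have : F n i = 0 := by omega
          have h2 := hF n i
          rw [this] at h2
          have := Real.rpow_pos_of_pos (show (0:ℝ) < 2 by norm_num) ((n:ℝ) * Rt i)
          rw [← h2] at this
          simp at this
        haveI : ∀ i, Nonempty (Fin (M n i)) := fun i => ⟨⟨0, hMnz i⟩⟩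
        haveI : ∀ i, Nonempty (Fin (F n i)) := fun i => ⟨⟨0, hFnz i⟩⟩
        have hne03 : (0 : Fin 3) ≠ j.succ := (Fin.succ_ne_zero j).symm
        -- the binning collision bound
        have hBIN : ∀ (z : ∀ j', Fin n → 𝒵 j') (y : Fin n → ∀ i, 𝒴 i),
            (∑ BM : ∀ i, (Fin n → 𝒴 i) → Fin (M n i),
              ∑ BF : ∀ i, (Fin n → 𝒴 i) → Fin (F n i),
                if evENS0 𝒵 𝒴 p pY j (δ' n) z y BM BF then (1:ℝ) else 0)
            ≤ (Tm n : ℝ) * CMc * CFc / Kd := by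
          intro z y
          set Sz := Finset.univ.filter
            (fun pr : (Fin n → 𝒴 0) × (Fin n → 𝒴 j.succ) =>
              typ3 𝒵 𝒴 j μ (δ' n) pr.1 pr.2 (z j)) with hSzdef
          have hcard : (Sz.card : ℝ) ≤ (Tm n : ℝ) := by
            have h4 := Finset.le_sup (f := fun zj : Fin n → 𝒵 j =>
              (Finset.univ.filter (fun pr : (Fin n → 𝒴 0) × (Fin n → 𝒴 j.succ) =>
                typ3 𝒵 𝒴 j μ (δ' n) pr.1 pr.2 zj)).card) (Finset.mem_univ (z j))
            have : Sz.card ≤ Tm n := by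
              rw [hTmdef, hSzdef]
              exact h4
            exact_mod_cast this
          have hstep1 : ∀ (BM : ∀ i, (Fin n → 𝒴 i) → Fin (M n i))
              (BF : ∀ i, (Fin n → 𝒴 i) → Fin (F n i)),
              (if evENS0 𝒵 𝒴 p pY j (δ' n) z y BM BF then (1:ℝ) else 0) ≤
              ∑ pr ∈ Sz, if ((pr.1 ≠ (fun t => y t 0) ∧ pr.2 ≠ (fun t => y t j.succ)) ∧
                (BM 0 pr.1 = BM 0 (fun t => y t 0) ∧
                  BM j.succ pr.2 = BM j.succ (fun t => y t j.succ)) ∧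
                (BF 0 pr.1 = BF 0 (fun t => y t 0) ∧
                  BF j.succ pr.2 = BF j.succ (fun t => y t j.succ))) then (1:ℝ) else 0 := by
            intro BM BF
            refine ite_imp_le_sum Sz _ ?_
            rintro ⟨y0', yj', hne0, hnej, hbm0, hbf0, hbmj, hbfj, htyp⟩
            exact ⟨(y0', yj'), Finset.mem_filter.mpr ⟨Finset.mem_univ _, htyp⟩,
              ⟨hne0, hnej⟩, ⟨hbm0, hbmj⟩, ⟨hbf0, hbfj⟩⟩
          calc (∑ BM : ∀ i, (Fin n → 𝒴 i) → Fin (M n i),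
              ∑ BF : ∀ i, (Fin n → 𝒴 i) → Fin (F n i),
                if evENS0 𝒵 𝒴 p pY j (δ' n) z y BM BF then (1:ℝ) else 0)
              ≤ ∑ BM : ∀ i, (Fin n → 𝒴 i) → Fin (M n i),
                ∑ BF : ∀ i, (Fin n → 𝒴 i) → Fin (F n i),
                ∑ pr ∈ Sz, if ((pr.1 ≠ (fun t => y t 0) ∧ pr.2 ≠ (fun t => y t j.succ)) ∧
                  (BM 0 pr.1 = BM 0 (fun t => y t 0) ∧
                    BM j.succ pr.2 = BM j.succ (fun t => y t j.succ)) ∧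
                  (BF 0 pr.1 = BF 0 (fun t => y t 0) ∧
                    BF j.succ pr.2 = BF j.succ (fun t => y t j.succ))) then (1:ℝ) else 0 :=
                Finset.sum_le_sum fun BM _ => Finset.sum_le_sum fun BF _ => hstep1 BM BF
            _ = ∑ pr ∈ Sz, ∑ BM : ∀ i, (Fin n → 𝒴 i) → Fin (M n i),
                ∑ BF : ∀ i, (Fin n → 𝒴 i) → Fin (F n i),
                  if ((pr.1 ≠ (fun t => y t 0) ∧ pr.2 ≠ (fun t => y t j.succ)) ∧
                  (BM 0 pr.1 = BM 0 (fun t => y t 0) ∧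
                    BM j.succ pr.2 = BM j.succ (fun t => y t j.succ)) ∧
                  (BF 0 pr.1 = BF 0 (fun t => y t 0) ∧
                    BF j.succ pr.2 = BF j.succ (fun t => y t j.succ))) then (1:ℝ) else 0 := by
                rw [Finset.sum_congr rfl (fun BM _ => Finset.sum_comm), Finset.sum_comm]
            _ ≤ ∑ pr ∈ Sz, (CMc:ℝ) * (CFc:ℝ) / ((M n 0 : ℝ) * (M n j.succ : ℝ) *
                ((F n 0 : ℝ) * (F n j.succ : ℝ))) := by
                refine Finset.sum_le_sum fun pr _ => ?_
                by_cases hne : pr.1 ≠ (fun t => y t 0) ∧ pr.2 ≠ (fun t => y t j.succ)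
                · have hsplit : ∀ (BM : ∀ i, (Fin n → 𝒴 i) → Fin (M n i))
                      (BF : ∀ i, (Fin n → 𝒴 i) → Fin (F n i)),
                      (if ((pr.1 ≠ (fun t => y t 0) ∧ pr.2 ≠ (fun t => y t j.succ)) ∧
                      (BM 0 pr.1 = BM 0 (fun t => y t 0) ∧
                        BM j.succ pr.2 = BM j.succ (fun t => y t j.succ)) ∧
                      (BF 0 pr.1 = BF 0 (fun t => y t 0) ∧
                        BF j.succ pr.2 = BF j.succ (fun t => y t j.succ))) then (1:ℝ) else 0)
                      = (if (BM 0 pr.1 = BM 0 (fun t => y t 0) ∧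
                          BM j.succ pr.2 = BM j.succ (fun t => y t j.succ)) then (1:ℝ) else 0) *
                        (if (BF 0 pr.1 = BF 0 (fun t => y t 0) ∧
                          BF j.succ pr.2 = BF j.succ (fun t => y t j.succ)) then (1:ℝ) else 0) := by
                      intro BM BF
                      by_cases h1 : (BM 0 pr.1 = BM 0 (fun t => y t 0) ∧
                          BM j.succ pr.2 = BM j.succ (fun t => y t j.succ)) <;>
                        by_cases h2 : (BF 0 pr.1 = BF 0 (fun t => y t 0) ∧
                          BF j.succ pr.2 = BF j.succ (fun t => y t j.succ)) <;>
                        simp [hne, h1, h2]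
                  have hM2 := pi2 (fun i => Fin n → 𝒴 i) (fun i => Fin (M n i))
                    hne03 hne.1 hne.2 (dec := fun _ => inferInstance)
                  have hF2 := pi2 (fun i => Fin n → 𝒴 i) (fun i => Fin (F n i))
                    hne03 hne.1 hne.2 (dec := fun _ => inferInstance)
                  rw [Fintype.card_fin, Fintype.card_fin] at hM2 hF2
                  have hsum : (∑ BM : ∀ i, (Fin n → 𝒴 i) → Fin (M n i),
                      ∑ BF : ∀ i, (Fin n → 𝒴 i) → Fin (F n i),
                      (if ((pr.1 ≠ (fun t => y t 0) ∧ pr.2 ≠ (fun t => y t j.succ)) ∧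
                      (BM 0 pr.1 = BM 0 (fun t => y t 0) ∧
                        BM j.succ pr.2 = BM j.succ (fun t => y t j.succ)) ∧
                      (BF 0 pr.1 = BF 0 (fun t => y t 0) ∧
                        BF j.succ pr.2 = BF j.succ (fun t => y t j.succ))) then (1:ℝ) else 0))
                      = (∑ BM : ∀ i, (Fin n → 𝒴 i) → Fin (M n i),
                          if (BM 0 pr.1 = BM 0 (fun t => y t 0) ∧
                            BM j.succ pr.2 = BM j.succ (fun t => y t j.succ)) then (1:ℝ) else 0) *
                        (∑ BF : ∀ i, (Fin n → 𝒴 i) → Fin (F n i),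
                          if (BF 0 pr.1 = BF 0 (fun t => y t 0) ∧
                            BF j.succ pr.2 = BF j.succ (fun t => y t j.succ)) then (1:ℝ) else 0) := by
                    rw [Finset.sum_mul]
                    refine Finset.sum_congr rfl fun BM _ => ?_
                    rw [Finset.mul_sum]
                    exact Finset.sum_congr rfl fun BF _ => hsplit BM BF
                  rw [hsum]
                  have he1 : (∑ BM : ∀ i, (Fin n → 𝒴 i) → Fin (M n i),
                      if (BM 0 pr.1 = BM 0 (fun t => y t 0) ∧
                        BM j.succ pr.2 = BM j.succ (fun t => y t j.succ)) then (1:ℝ) else 0)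
                      = (CMc:ℝ) / ((M n 0 : ℝ) * (M n j.succ : ℝ)) := by
                    rw [eq_div_iff (by positivity)]
                    exact_mod_cast hM2
                  have he2 : (∑ BF : ∀ i, (Fin n → 𝒴 i) → Fin (F n i),
                      if (BF 0 pr.1 = BF 0 (fun t => y t 0) ∧
                        BF j.succ pr.2 = BF j.succ (fun t => y t j.succ)) then (1:ℝ) else 0)
                      = (CFc:ℝ) / ((F n 0 : ℝ) * (F n j.succ : ℝ)) := by
                    rw [eq_div_iff (by positivity)]
                    exact_mod_cast hF2
                  rw [he1, he2]
                  rw [div_mul_div_comm]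
                · -- the distinctness fails: everything is zero
                  have hz : ∀ (BM : ∀ i, (Fin n → 𝒴 i) → Fin (M n i))
                      (BF : ∀ i, (Fin n → 𝒴 i) → Fin (F n i)),
                      (if ((pr.1 ≠ (fun t => y t 0) ∧ pr.2 ≠ (fun t => y t j.succ)) ∧
                      (BM 0 pr.1 = BM 0 (fun t => y t 0) ∧
                        BM j.succ pr.2 = BM j.succ (fun t => y t j.succ)) ∧
                      (BF 0 pr.1 = BF 0 (fun t => y t 0) ∧
                        BF j.succ pr.2 = BF j.succ (fun t => y t j.succ))) then (1:ℝ) else 0) = 0 := by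
                    intro BM BF
                    rw [if_neg]
                    rintro ⟨h1, -, -⟩
                    exact hne h1
                  rw [Finset.sum_congr rfl (fun BM _ => Finset.sum_congr rfl
                    (fun BF _ => hz BM BF)), Finset.sum_congr rfl
                    (fun BM _ => Finset.sum_const_zero), Finset.sum_const_zero]
                  positivity
            _ = (Sz.card : ℝ) * ((CMc:ℝ) * (CFc:ℝ) / ((M n 0 : ℝ) * (M n j.succ : ℝ) *
                ((F n 0 : ℝ) * (F n j.succ : ℝ)))) := by
                rw [Finset.sum_const, nsmul_eq_mul]
            _ ≤ (Tm n : ℝ) * CMc * CFc / Kd := by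
                rw [hKddef]
                have hb : (0:ℝ) ≤ (CMc:ℝ) * (CFc:ℝ) / ((M n 0 : ℝ) * (M n j.succ : ℝ) *
                    ((F n 0 : ℝ) * (F n j.succ : ℝ))) := by positivity
                calc (Sz.card : ℝ) * ((CMc:ℝ) * (CFc:ℝ) / ((M n 0 : ℝ) * (M n j.succ : ℝ) *
                    ((F n 0 : ℝ) * (F n j.succ : ℝ))))
                    ≤ (Tm n : ℝ) * ((CMc:ℝ) * (CFc:ℝ) / ((M n 0 : ℝ) * (M n j.succ : ℝ) *
                    ((F n 0 : ℝ) * (F n j.succ : ℝ)))) :=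
                      mul_le_mul_of_nonneg_right hcard hb
                  _ = (Tm n : ℝ) * CMc * CFc / ((M n 0 : ℝ) * (M n j.succ : ℝ) *
                      (F n 0 : ℝ) * (F n j.succ : ℝ)) := by ring
        -- numerator vs denominator
        have hnum_le : prA 𝒵 𝒴 q pY (M n) (F n) n (fun x z y BM BF =>
            evENS0 𝒵 𝒴 p pY j (δ' n) z y BM BF ∧
            evE0 𝒴 (fun w => (∑ zz : ∀ j', 𝒵 j', p (w.1, zz)) * pY w.1 w.2) (δ' n) x y ∧
            evPsi0 (fun c => ∑ a : 𝒳, ∑ zz : ∀ j', 𝒵 j',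
              if zz j = c then p (a, zz) else 0) (δ' n) (z j)) ≤
            ((Tm n : ℝ) / Kd) * prA 𝒵 𝒴 q pY (M n) (F n) n (fun x z y _BM _BF =>
            evE0 𝒴 (fun w => (∑ zz : ∀ j', 𝒵 j', p (w.1, zz)) * pY w.1 w.2) (δ' n) x y ∧
            evPsi0 (fun c => ∑ a : 𝒳, ∑ zz : ∀ j', 𝒵 j',
              if zz j = c then p (a, zz) else 0) (δ' n) (z j)) := by
          unfold prA
          rw [Finset.mul_sum]
          refine Finset.sum_le_sum fun x _ => ?_
          rw [Finset.mul_sum]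
          refine Finset.sum_le_sum fun z _ => ?_
          rw [Finset.mul_sum]
          refine Finset.sum_le_sum fun y _ => ?_
          set W : ℝ := (∏ t, q (x t, fun j' => z j' t)) * (∏ t, pY (x t) (y t)) with hWdef
          have hWnn : 0 ≤ W := by
            rw [hWdef]
            exact mul_nonneg (Finset.prod_nonneg fun t _ => hq0 _)
              (Finset.prod_nonneg fun t _ => hpY0 _ _)
          set v : ℝ := W / ((CMc:ℝ) * (CFc:ℝ)) with hvdef
          have hvnn : 0 ≤ v := by rw [hvdef]; positivity
          set Qev : Prop :=
            (evE0 𝒴 (fun w => (∑ zz : ∀ j', 𝒵 j', p (w.1, zz)) * pY w.1 w.2) (δ' n) x y ∧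
            evPsi0 (fun c => ∑ a : 𝒳, ∑ zz : ∀ j', 𝒵 j',
              if zz j = c then p (a, zz) else 0) (δ' n) (z j)) with hQev
          have key : (∑ BM : ∀ i, (Fin n → 𝒴 i) → Fin (M n i),
              ∑ BF : ∀ i, (Fin n → 𝒴 i) → Fin (F n i),
              if (evENS0 𝒵 𝒴 p pY j (δ' n) z y BM BF ∧ Qev) then v else 0) ≤
            ((Tm n : ℝ) / Kd) * (∑ BM : ∀ i, (Fin n → 𝒴 i) → Fin (M n i),
              ∑ BF : ∀ i, (Fin n → 𝒴 i) → Fin (F n i), if Qev then v else 0) := by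
            calc (∑ BM : ∀ i, (Fin n → 𝒴 i) → Fin (M n i),
                ∑ BF : ∀ i, (Fin n → 𝒴 i) → Fin (F n i),
                if (evENS0 𝒵 𝒴 p pY j (δ' n) z y BM BF ∧ Qev) then v else 0)
                = (∑ BM : ∀ i, (Fin n → 𝒴 i) → Fin (M n i),
                  ∑ BF : ∀ i, (Fin n → 𝒴 i) → Fin (F n i),
                  if evENS0 𝒵 𝒴 p pY j (δ' n) z y BM BF then (1:ℝ) else 0) *
                  (if Qev then v else 0) := by
                  rw [Finset.sum_mul]
                  refine Finset.sum_congr rfl fun BM _ => ?_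
                  rw [Finset.sum_mul]
                  exact Finset.sum_congr rfl fun BF _ => ite_and_mul' v
              _ ≤ ((Tm n : ℝ) * CMc * CFc / Kd) * (if Qev then v else 0) := by
                  refine mul_le_mul_of_nonneg_right (hBIN z y) ?_
                  by_cases h : Qev
                  · rw [if_pos h]; exact hvnn
                  · rw [if_neg h]
              _ = ((Tm n : ℝ) / Kd) * (∑ BM : ∀ i, (Fin n → 𝒴 i) → Fin (M n i),
                  ∑ BF : ∀ i, (Fin n → 𝒴 i) → Fin (F n i), if Qev then v else 0) := by
                  have hs : (∑ BM : ∀ i, (Fin n → 𝒴 i) → Fin (M n i),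
                      ∑ BF : ∀ i, (Fin n → 𝒴 i) → Fin (F n i), if Qev then v else 0)
                      = (CMc:ℝ) * ((CFc:ℝ) * (if Qev then v else 0)) := by
                    rw [Finset.sum_const, Finset.sum_const, Finset.card_univ,
                      Finset.card_univ, nsmul_eq_mul, nsmul_eq_mul]
                  rw [hs]
                  ring
          refine le_trans (le_of_eq ?_) (le_trans key (le_of_eq ?_))
          · exact Finset.sum_congr rfl fun BM _ => Finset.sum_congr rfl fun BF _ =>
              ite_cong' Iff.rfl
          · exact congrArg _ (Finset.sum_congr rfl fun BM _ => Finset.sum_congr rfl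
              fun BF _ => ite_cong' Iff.rfl)
        have hratio : prA 𝒵 𝒴 q pY (M n) (F n) n (fun x z y BM BF =>
            evENS0 𝒵 𝒴 p pY j (δ' n) z y BM BF ∧
            evE0 𝒴 (fun w => (∑ zz : ∀ j', 𝒵 j', p (w.1, zz)) * pY w.1 w.2) (δ' n) x y ∧
            evPsi0 (fun c => ∑ a : 𝒳, ∑ zz : ∀ j', 𝒵 j',
              if zz j = c then p (a, zz) else 0) (δ' n) (z j)) /
            prA 𝒵 𝒴 q pY (M n) (F n) n (fun x z y _BM _BF =>
            evE0 𝒴 (fun w => (∑ zz : ∀ j', 𝒵 j', p (w.1, zz)) * pY w.1 w.2) (δ' n) x y ∧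
            evPsi0 (fun c => ∑ a : 𝒳, ∑ zz : ∀ j', 𝒵 j',
              if zz j = c then p (a, zz) else 0) (δ' n) (z j)) ≤ (Tm n : ℝ) / Kd := by
          refine div_le_of_le_mul'
            (prA_nonneg 𝒵 𝒴 q pY hq0 hpY0 (M n) (F n) n _) (by positivity) hnum_le
        refine le_trans hratio ?_
        -- final exponent computation
        have hKd2 : Kd = (2:ℝ) ^ ((n:ℝ) * (R 0 + Rt 0 + R j.succ + Rt j.succ)) := by
          rw [hKddef, hM n 0, hM n j.succ, hF n 0, hF n j.succ,
            ← Real.rpow_add (by norm_num : (0:ℝ) < 2),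
            ← Real.rpow_add (by norm_num : (0:ℝ) < 2),
            ← Real.rpow_add (by norm_num : (0:ℝ) < 2)]
          congr 1
          ring
        have hη' : Real.logb 2 (Tm n : ℝ) ≤ (n:ℝ) * (Hent + η n) := by
          have h1 : Real.logb 2 (Tm n : ℝ) / n - Hent ≤ η n := by
            have hηn : η n = max 0 (Real.logb 2 (Tm n) / n - Hent) := by
              rw [hηdef]; simp only; rw [if_neg hn0]
            rw [hηn]
            exact le_max_right _ _
          rw [← sub_nonneg]
          have h2 : (n:ℝ) * (Hent + η n) - Real.logb 2 (Tm n : ℝ)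
              = (n:ℝ) * ((η n - (Real.logb 2 (Tm n : ℝ) / n - Hent))) := by
            field_simp
            ring
          rw [h2]
          have := sub_nonneg.mpr h1
          positivity
        have hTle : (Tm n : ℝ) ≤ (2:ℝ) ^ ((n:ℝ) * (Hent + η n)) := by
          calc (Tm n : ℝ) = (2:ℝ) ^ (Real.logb 2 (Tm n : ℝ)) :=
              (Real.rpow_logb (by norm_num) (by norm_num) hTposR).symm
            _ ≤ _ := by
              apply Real.rpow_le_rpow_of_exponent_le (by norm_num) hη'
        calc (Tm n : ℝ) / Kd ≤ (2:ℝ) ^ ((n:ℝ) * (Hent + η n)) / Kd := by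
              exact div_le_div_of_nonneg_right hTle hKdpos.le |>.trans_eq rfl
          _ = (2:ℝ) ^ (-(n:ℝ) * (R 0 + Rt 0 + R j.succ + Rt j.succ - Hent - η n)) := by
              rw [hKd2, ← Real.rpow_sub (by norm_num : (0:ℝ) < 2)]
              congr 1
              ring
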